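/- (Reach-and-Stay-While-Avoid certificate) Let X_S be a compact safe set, X_I ⊂ interior(X_S) compact, X_F ⊂ interior(X_S) compact. Suppose V : ℝⁿ → ℝ is C¹ and there exist γ > 0 and β < 0 with: V ≤ 0 on X_I; V > 0 on ∂X_S; V̇ ≤ −γ on {x ∈ X_S : V(x) ≤ 0} \ X_F; V > β on ∂X_F; and V̇ ≤ −γ on X_F \ interior({x ∈ X_S : V(x) ≤ β}). Then every trajectory started in X_I avoids X_U = X \ X_S, reaches in finite time the set X_F ∩ {V ≤ β}, and remains in X_F for all subsequent times. -/

import Mathlib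

/-- If `g` has derivative `c < 0` at `τ`, then `g t < g τ` for `t` slightly above `τ`. -/
lemma rswa_loc_decr {g : ℝ → ℝ} {c τ : ℝ} (hg : HasDerivAt g c τ) (hc : c < 0) :
    ∀ᶠ t in nhdsWithin τ (Set.Ioi τ), g t < g τ := by
  have h := hasDerivAt_iff_tendsto_slope.mp hg
  have h2 : ∀ᶠ t in nhdsWithin τ {τ}ᶜ, slope g τ t < 0 := h.eventually_lt_const hc
  have hle : nhdsWithin τ (Set.Ioi τ) ≤ nhdsWithin τ {τ}ᶜ :=
    nhdsWithin_mono τ (fun x hx => ne_of_gt hx)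
  filter_upwards [h2.filter_mono hle, self_mem_nhdsWithin] with t ht hts
  have htτ : (0:ℝ) < t - τ := sub_pos.mpr hts
  rw [slope_def_field] at ht
  have : g t - g τ < 0 := by
    rcases div_neg_iff.mp ht with ⟨h1, h2⟩ | ⟨h1, h2⟩
    · linarith
    · linarith
  linarith

/-- Comparison lemma: a derivative bound `d ≤ -γ` on `[a,b]` yields a value bound. -/
lemma rswa_comp {g d : ℝ → ℝ} {γ a b : ℝ} (hg : ∀ t, HasDerivAt g (d t) t)
    (hab : a ≤ b) (hd : ∀ t ∈ Set.Icc a b, d t ≤ -γ) :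
    g b ≤ g a - γ * (b - a) := by
  have hg' : ∀ t, HasDerivAt (fun s => g s + γ * s) (d t + γ) t := by
    intro t
    exact ((hg t).add ((hasDerivAt_id' t).const_mul γ)).congr_deriv (by ring)
  have key : AntitoneOn (fun t => g t + γ * t) (Set.Icc a b) := by
    apply antitoneOn_of_deriv_nonpos (convex_Icc a b)
    · exact Continuous.continuousOn (by
        have : Continuous g := by
          rw [continuous_iff_continuousAt]; exact fun t => (hg t).continuousAt
        fun_prop)
    · intro x hx
      exact (hg' x).differentiableAt.differentiableWithinAt
    · intro x hx
      rw [(hg' x).deriv]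
      have := hd x (interior_subset hx)
      linarith
  have := key ⟨le_rfl, hab⟩ ⟨hab, le_rfl⟩ hab
  simp only at this
  linarith

/-- A closed set containing `t₀` which locally propagates to the right contains `[t₀, ∞)`. -/
lemma rswa_invariance {C : Set ℝ} (hC : IsClosed C) {t₀ : ℝ} (h0 : t₀ ∈ C)
    (hstep : ∀ τ, t₀ ≤ τ → Set.Icc t₀ τ ⊆ C → ∃ ε > 0, Set.Ioc τ (τ + ε) ⊆ C) :
    Set.Ici t₀ ⊆ C := by
  intro t ht
  set A := {τ | τ ∈ Set.Icc t₀ t ∧ Set.Icc t₀ τ ⊆ C} with hA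
  have hA0 : t₀ ∈ A := ⟨⟨le_rfl, ht⟩, by
    intro s hs
    have : s = t₀ := le_antisymm hs.2 hs.1
    simpa [this] using h0⟩
  have hAne : A.Nonempty := ⟨t₀, hA0⟩
  have hAbdd : BddAbove A := ⟨t, fun τ hτ => hτ.1.2⟩
  set m := sSup A with hm
  have hmIcc : m ∈ Set.Icc t₀ t :=
    ⟨le_csSup hAbdd hA0, csSup_le hAne fun τ hτ => hτ.1.2⟩
  have hIco : Set.Ico t₀ m ⊆ C := by
    intro s hs
    obtain ⟨τ, hτA, hsτ⟩ := exists_lt_of_lt_csSup hAne hs.2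
    exact hτA.2 ⟨hs.1, hsτ.le⟩
  have hmC : m ∈ C := by
    rcases eq_or_lt_of_le hmIcc.1 with h | h
    · simpa [← h] using h0
    · have h1 : m ∈ closure (Set.Ico t₀ m) := by
        rw [closure_Ico (ne_of_lt h)]; exact ⟨hmIcc.1, le_rfl⟩
      exact hC.closure_subset (closure_mono hIco h1)
  have hsub : Set.Icc t₀ m ⊆ C := by
    intro s hs
    rcases eq_or_lt_of_le hs.2 with h | h
    · simpa [h] using hmC
    · exact hIco ⟨hs.1, h⟩
  rcases eq_or_lt_of_le hmIcc.2 with h | h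
  · rw [← h]; exact hsub ⟨hmIcc.1, le_rfl⟩
  · exfalso
    obtain ⟨ε, hε, hIoc⟩ := hstep m hmIcc.1 hsub
    set τ' := min (m + ε) t with hτ'
    have hτ'A : τ' ∈ A := by
      constructor
      · exact ⟨le_trans hmIcc.1 (le_trans (le_min (by linarith) h.le) le_rfl), min_le_right _ _⟩
      · intro s hs
        rcases le_or_gt s m with h1 | h1
        · exact hsub ⟨hs.1, h1⟩
        · exact hIoc ⟨h1, le_trans hs.2 (min_le_left _ _)⟩
    have : τ' ≤ m := le_csSup hAbdd hτ'A
    have : m < τ' := lt_min (by linarith) h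
    linarith

/-- Reach-and-Stay-While-Avoid certificate (Theorem 4): under the RSWA
conditions, every trajectory started in `X_I` avoids `X_U = X \ X_S`, reaches
the set `X_F ∩ {V ≤ β}` in finite time, and remains in `X_F` afterwards. -/
theorem rswa_certificate {n : ℕ}
    (f : EuclideanSpace ℝ (Fin n) → EuclideanSpace ℝ (Fin n))
    (X XS XI XF : Set (EuclideanSpace ℝ (Fin n)))
    (hXS : IsCompact XS) (hXSX : XS ⊆ X)
    (hXI : IsCompact XI) (hXIint : XI ⊆ interior XS)
    (hXF : IsCompact XF) (hXFint : XF ⊆ interior XS)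
    (hlip : ∃ K : NNReal, LipschitzWith K f)
    (V : EuclideanSpace ℝ (Fin n) → ℝ)
    (hV : ContDiff ℝ 1 V)
    (γ β : ℝ) (hγ : 0 < γ) (hβ : β < 0)
    (hVI : ∀ x ∈ XI, V x ≤ 0)
    (hVbd : ∀ x ∈ frontier XS, 0 < V x)
    (hVdot1 : ∀ x ∈ {x ∈ XS | V x ≤ 0} \ XF, (fderiv ℝ V x) (f x) ≤ -γ)
    (hVbdF : ∀ x ∈ frontier XF, β < V x)
    (hVdot2 : ∀ x ∈ XF \ interior {x ∈ XS | V x ≤ β},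
      (fderiv ℝ V x) (f x) ≤ -γ) :
    ∀ (ξ : ℝ → EuclideanSpace ℝ (Fin n)) (t₀ : ℝ),
      (∀ t, HasDerivAt ξ (f (ξ t)) t) → ξ t₀ ∈ XI →
      ∃ T, t₀ ≤ T ∧
        (∀ t ∈ Set.Icc t₀ T, ξ t ∉ X \ XS) ∧
        ξ T ∈ XF ∩ {x ∈ XS | V x ≤ β} ∧
        ∀ t, T ≤ t → ξ t ∈ XF := by
  intro ξ t₀ hξ hξ0
  have hVdiff : Differentiable ℝ V := hV.differentiable one_ne_zero
  set g : ℝ → ℝ := fun t => V (ξ t) with hgdef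
  set d : ℝ → ℝ := fun t => (fderiv ℝ V (ξ t)) (f (ξ t)) with hddef
  have hg : ∀ t, HasDerivAt g (d t) t := fun t =>
    ((hVdiff (ξ t)).hasFDerivAt).comp_hasDerivAt t (hξ t)
  have hξcont : Continuous ξ := continuous_iff_continuousAt.mpr fun t => (hξ t).continuousAt
  have hgcont : Continuous g := hV.continuous.comp hξcont
  have hXSc : IsClosed XS := hXS.isClosed
  have hXFc : IsClosed XF := hXF.isClosed
  -- Claim 1: the trajectory stays in XS with V ≤ 0 for all t ≥ t₀.
  have claim1 : ∀ t, t₀ ≤ t → ξ t ∈ XS ∧ g t ≤ 0 := by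
    have hCc : IsClosed {t | ξ t ∈ XS ∧ g t ≤ 0} := by
      have : {t | ξ t ∈ XS ∧ g t ≤ 0} = ξ ⁻¹' XS ∩ g ⁻¹' Set.Iic 0 := rfl
      rw [this]
      exact (hXSc.preimage hξcont).inter (isClosed_Iic.preimage hgcont)
    have h0 : t₀ ∈ {t | ξ t ∈ XS ∧ g t ≤ 0} :=
      ⟨interior_subset (hXIint hξ0), hVI _ hξ0⟩
    have hstep : ∀ τ, t₀ ≤ τ → Set.Icc t₀ τ ⊆ {t | ξ t ∈ XS ∧ g t ≤ 0} →
        ∃ ε > 0, Set.Ioc τ (τ + ε) ⊆ {t | ξ t ∈ XS ∧ g t ≤ 0} := by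
      intro τ hτ hIcc
      have hx : ξ τ ∈ XS := (hIcc ⟨hτ, le_rfl⟩).1
      have hv : g τ ≤ 0 := (hIcc ⟨hτ, le_rfl⟩).2
      have hint : ξ τ ∈ interior XS := by
        by_contra h
        have hfr : ξ τ ∈ frontier XS := by rw [hXSc.frontier_eq]; exact ⟨hx, h⟩
        exact absurd hv (not_le.mpr (hVbd _ hfr))
      have hev1 : ∀ᶠ t in nhdsWithin τ (Set.Ioi τ), ξ t ∈ XS := by
        have h1 : ∀ᶠ t in nhds τ, ξ t ∈ interior XS :=
          hξcont.continuousAt.preimage_mem_nhds (isOpen_interior.mem_nhds hint)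
        exact (h1.mono fun t ht => interior_subset ht).filter_mono nhdsWithin_le_nhds
      have hev2 : ∀ᶠ t in nhdsWithin τ (Set.Ioi τ), g t ≤ 0 := by
        rcases lt_or_eq_of_le hv with h | h
        · have h1 : ∀ᶠ t in nhds τ, g t < 0 := (hgcont.tendsto τ).eventually_lt_const h
          exact (h1.mono fun t ht => ht.le).filter_mono nhdsWithin_le_nhds
        · have hnot : ξ τ ∉ interior {x ∈ XS | V x ≤ β} := by
            intro hmem
            have : V (ξ τ) ≤ β := (interior_subset hmem).2
            have : g τ ≤ β := this
            linarith
          have hder : d τ ≤ -γ := by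
            by_cases hF : ξ τ ∈ XF
            · exact hVdot2 _ ⟨hF, hnot⟩
            · exact hVdot1 _ ⟨⟨hx, hv⟩, hF⟩
          have := rswa_loc_decr (hg τ) (lt_of_le_of_lt hder (by linarith))
          exact this.mono fun t ht => le_of_lt (lt_of_lt_of_le ht h.le)
      obtain ⟨u, hu, hsub⟩ := mem_nhdsGT_iff_exists_Ioc_subset.mp (hev1.and hev2)
      exact ⟨u - τ, by simpa using hu, by
        have : τ + (u - τ) = u := by ring
        rw [this]; exact fun s hs => hsub hs⟩
    intro t ht
    exact rswa_invariance hCc h0 hstep ht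
  -- Reach: there is T ≥ t₀ with ξ T ∈ XF and V (ξ T) ≤ β.
  have hXSne : XS.Nonempty := ⟨ξ t₀, (claim1 t₀ le_rfl).1⟩
  obtain ⟨xm, hxmXS, hxm⟩ := hXS.exists_isMinOn hXSne hV.continuous.continuousOn
  have hreach : ∃ T, t₀ ≤ T ∧ ξ T ∈ XF ∧ g T ≤ β := by
    by_contra h
    push_neg at h
    have hm0 : V xm ≤ g t₀ := hxm (claim1 t₀ le_rfl).1
    set t₁ := t₀ + (g t₀ - V xm + 1) / γ with ht₁
    have ht01 : t₀ ≤ t₁ := by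
      have : 0 ≤ (g t₀ - V xm + 1) / γ := div_nonneg (by linarith) hγ.le
      rw [ht₁]; linarith
    have hder : ∀ t ∈ Set.Icc t₀ t₁, d t ≤ -γ := by
      intro t htI
      have h1 := claim1 t htI.1
      by_cases hF : ξ t ∈ XF
      · have hβt : β < g t := h t htI.1 hF
        have hnot : ξ t ∉ interior {x ∈ XS | V x ≤ β} := by
          intro hmem
          have : V (ξ t) ≤ β := (interior_subset hmem).2
          have : g t ≤ β := this
          linarith
        exact hVdot2 _ ⟨hF, hnot⟩
      · exact hVdot1 _ ⟨⟨h1.1, h1.2⟩, hF⟩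
    have hcomp := rswa_comp hg ht01 hder
    have hmt1 : V xm ≤ g t₁ := hxm (claim1 t₁ ht01).1
    have hγne : γ ≠ 0 := ne_of_gt hγ
    have : γ * (t₁ - t₀) = g t₀ - V xm + 1 := by
      rw [ht₁]; field_simp; ring
    linarith
  obtain ⟨T, hT0, hTF, hTβ⟩ := hreach
  -- Stay: the set XF ∩ {V ≤ β} is forward invariant from time T.
  have claimC : ∀ t, T ≤ t → ξ t ∈ XF ∧ g t ≤ β := by
    have hCc : IsClosed {t | ξ t ∈ XF ∧ g t ≤ β} := by
      have : {t | ξ t ∈ XF ∧ g t ≤ β} = ξ ⁻¹' XF ∩ g ⁻¹' Set.Iic β := rfl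
      rw [this]
      exact (hXFc.preimage hξcont).inter (isClosed_Iic.preimage hgcont)
    have h0 : T ∈ {t | ξ t ∈ XF ∧ g t ≤ β} := ⟨hTF, hTβ⟩
    have hstep : ∀ τ, T ≤ τ → Set.Icc T τ ⊆ {t | ξ t ∈ XF ∧ g t ≤ β} →
        ∃ ε > 0, Set.Ioc τ (τ + ε) ⊆ {t | ξ t ∈ XF ∧ g t ≤ β} := by
      intro τ hτ hIcc
      have hx : ξ τ ∈ XF := (hIcc ⟨hτ, le_rfl⟩).1
      have hv : g τ ≤ β := (hIcc ⟨hτ, le_rfl⟩).2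
      have hint : ξ τ ∈ interior XF := by
        by_contra h
        have hfr : ξ τ ∈ frontier XF := by rw [hXFc.frontier_eq]; exact ⟨hx, h⟩
        exact absurd hv (not_le.mpr (hVbdF _ hfr))
      have hev1 : ∀ᶠ t in nhdsWithin τ (Set.Ioi τ), ξ t ∈ XF := by
        have h1 : ∀ᶠ t in nhds τ, ξ t ∈ interior XF :=
          hξcont.continuousAt.preimage_mem_nhds (isOpen_interior.mem_nhds hint)
        exact (h1.mono fun t ht => interior_subset ht).filter_mono nhdsWithin_le_nhds
      have hev2 : ∀ᶠ t in nhdsWithin τ (Set.Ioi τ), g t ≤ β := by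
        rcases lt_or_eq_of_le hv with h | h
        · have h1 : ∀ᶠ t in nhds τ, g t < β := (hgcont.tendsto τ).eventually_lt_const h
          exact (h1.mono fun t ht => ht.le).filter_mono nhdsWithin_le_nhds
        · by_cases hmem : ξ τ ∈ interior {x ∈ XS | V x ≤ β}
          · have h1 : ∀ᶠ t in nhds τ, ξ t ∈ interior {x ∈ XS | V x ≤ β} :=
              hξcont.continuousAt.preimage_mem_nhds (isOpen_interior.mem_nhds hmem)
            exact (h1.mono fun t ht => (interior_subset ht).2).filter_mono nhdsWithin_le_nhds
          · have hder : d τ ≤ -γ := hVdot2 _ ⟨hx, hmem⟩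
            have := rswa_loc_decr (hg τ) (lt_of_le_of_lt hder (by linarith))
            exact this.mono fun t ht => le_of_lt (lt_of_lt_of_le ht h.le)
      obtain ⟨u, hu, hsub⟩ := mem_nhdsGT_iff_exists_Ioc_subset.mp (hev1.and hev2)
      exact ⟨u - τ, by simpa using hu, by
        have : τ + (u - τ) = u := by ring
        rw [this]; exact fun s hs => hsub hs⟩
    intro t ht
    exact rswa_invariance hCc h0 hstep ht
  refine ⟨T, hT0, ?_, ?_, ?_⟩
  · intro t htI hmem
    exact hmem.2 ((claim1 t htI.1).1)
  · exact ⟨hTF, (claim1 T hT0).1, hTβ⟩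
  · intro t ht
    exact (claimC t ht).1
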